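/- Let ψ : ℝ → ℝ be a convex, L-Lipschitz, even function, and Y a real random variable whose distribution has no atoms. Then R(u) = E[ψ(u − Y)] is convex and differentiable with R'(u) = E[ψ'(u − Y)] (where ψ' is defined Lebesgue-almost-everywhere). Moreover, if Y is symmetric around q (i.e. q − Y has the same distribution as Y − q), then R attains a minimum at q. -/

import Mathlib

open MeasureTheory

open Set

section RD
variable {ψ : ℝ → ℝ} {L : NNReal}

noncomputable def rdAux (ψ : ℝ → ℝ) (x : ℝ) : ℝ := sInf ((fun y => slope ψ x y) '' Set.Ioi x)

lemma slope_abs_le (hψlip : LipschitzWith L ψ) {x y : ℝ} (hxy : x ≠ y) :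
    |slope ψ x y| ≤ (L : ℝ) := by
  rw [slope_def_field, div_eq_mul_inv, abs_mul, abs_inv]
  have h1 : |ψ y - ψ x| ≤ (L : ℝ) * |y - x| := by
    have := hψlip.dist_le_mul y x
    simpa [Real.dist_eq] using this
  have h2 : (0:ℝ) < |y - x| := abs_pos.2 (sub_ne_zero.2 (Ne.symm hxy))
  calc |ψ y - ψ x| * |y - x|⁻¹ ≤ ((L:ℝ) * |y - x|) * |y - x|⁻¹ := by
        apply mul_le_mul_of_nonneg_right h1 (by positivity)
    _ = (L:ℝ) := by field_simp

lemma rd_bddBelow (hψlip : LipschitzWith L ψ) (x : ℝ) :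
    BddBelow ((fun y => slope ψ x y) '' Set.Ioi x) := by
  refine ⟨-(L:ℝ), ?_⟩
  rintro _ ⟨y, hy, rfl⟩
  have := slope_abs_le hψlip (x := x) (y := y) (ne_of_lt hy)
  linarith [abs_le.1 this |>.1]

lemma rd_le_slope (hψconv : ConvexOn ℝ Set.univ ψ) (hψlip : LipschitzWith L ψ)
    {x y : ℝ} (hxy : x < y) : rdAux ψ x ≤ slope ψ x y :=
  csInf_le (rd_bddBelow hψlip x) ⟨y, hxy, rfl⟩

lemma slope_le_rd (hψconv : ConvexOn ℝ Set.univ ψ) (hψlip : LipschitzWith L ψ)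
    {w x : ℝ} (hwx : w < x) : slope ψ x w ≤ rdAux ψ x := by
  apply le_csInf (Set.nonempty_Ioi.image _)
  rintro _ ⟨y, hy, rfl⟩
  exact hψconv.slope_mono (mem_univ x) ⟨mem_univ w, ne_of_lt hwx⟩
    ⟨mem_univ y, ne_of_gt hy⟩ (le_of_lt (hwx.trans hy))

lemma rd_mono (hψconv : ConvexOn ℝ Set.univ ψ) (hψlip : LipschitzWith L ψ) :
    Monotone (rdAux ψ) := by
  intro x x' h
  rcases eq_or_lt_of_le h with rfl | h
  · exact le_refl _
  · calc rdAux ψ x ≤ slope ψ x x' := rd_le_slope hψconv hψlip h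
    _ = slope ψ x' x := slope_comm ψ x x'
    _ ≤ rdAux ψ x' := slope_le_rd hψconv hψlip h

lemma hasDerivAt_of_continuousAt_rd (hψconv : ConvexOn ℝ Set.univ ψ)
    (hψlip : LipschitzWith L ψ) {x : ℝ} (hc : ContinuousAt (rdAux ψ) x) :
    HasDerivAt ψ (rdAux ψ x) x := by
  rw [hasDerivAt_iff_tendsto_slope]
  rw [Metric.tendsto_nhds]
  intro ε hε
  have hg : Filter.Tendsto (rdAux ψ) (nhdsWithin x {x}ᶜ) (nhds (rdAux ψ x)) :=
    hc.continuousWithinAt.tendsto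
  have := (Metric.tendsto_nhds.1 hg) ε hε
  filter_upwards [this, self_mem_nhdsWithin] with y hy (hyx : y ≠ x)
  have key : dist (slope ψ x y) (rdAux ψ x) ≤ dist (rdAux ψ y) (rdAux ψ x) := by
    rcases lt_or_gt_of_ne hyx with h | h
    · -- y < x : rd y ≤ slope ψ x y ≤ rd x
      have h1 : slope ψ x y ≤ rdAux ψ x := slope_le_rd hψconv hψlip h
      have h2 : rdAux ψ y ≤ slope ψ x y := by
        rw [slope_comm]; exact rd_le_slope hψconv hψlip h
      rw [Real.dist_eq, Real.dist_eq, abs_sub_comm (rdAux ψ y)]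
      rw [abs_of_nonpos (by linarith), abs_of_nonneg (by linarith)]
      linarith
    · have h1 : rdAux ψ x ≤ slope ψ x y := rd_le_slope hψconv hψlip h
      have h2 : slope ψ x y ≤ rdAux ψ y := by
        rw [slope_comm]; exact slope_le_rd hψconv hψlip h
      rw [Real.dist_eq, Real.dist_eq]
      rw [abs_of_nonneg (by linarith), abs_of_nonneg (by linarith)]
      linarith
  exact lt_of_le_of_lt key hy

end RD


/-- Lemma (risk_deriv): if `ψ` is convex, Lipschitz and even, and `Y` has a non-atomic
law, then `R u = E[ψ(u - Y)]` is convex and differentiable with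
`R'(u) = E[ψ'(u - Y)]`; moreover if `q - Y ∼ Y - q` then `R` attains a minimum at `q`. -/
theorem stmt_11 {Ω : Type*} [MeasurableSpace Ω] (μ : Measure Ω) [IsProbabilityMeasure μ]
    (ψ : ℝ → ℝ) (L : NNReal) (hψconv : ConvexOn ℝ Set.univ ψ)
    (hψlip : LipschitzWith L ψ) (hψeven : ∀ z, ψ (-z) = ψ z)
    (Y : Ω → ℝ) (hY : Measurable Y) (hYint : Integrable Y μ)
    (hNoAtom : ∀ y : ℝ, μ (Y ⁻¹' {y}) = 0)
    (R : ℝ → ℝ) (hR : ∀ u, R u = ∫ ω, ψ (u - Y ω) ∂μ) :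
    ConvexOn ℝ Set.univ R ∧
      (∀ u, HasDerivAt R (∫ ω, deriv ψ (u - Y ω) ∂μ) u) ∧
      (∀ q : ℝ, Measure.map (fun ω => q - Y ω) μ = Measure.map (fun ω => Y ω - q) μ →
        ∀ u, R q ≤ R u) := by
  classical
  have hψcont : Continuous ψ := hψlip.continuous
  have hlipc : ∀ c : ℝ, LipschitzWith L (fun x => ψ (x - c)) := by
    intro c
    intro x y
    have := hψlip (x - c) (y - c)
    simpa [edist_dist, Real.dist_eq] using this
  have hInt : ∀ u : ℝ, Integrable (fun ω => ψ (u - Y ω)) μ := by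
    intro u
    refine Integrable.mono' ((integrable_const (|ψ 0| + (L:ℝ) * |u|)).add (hYint.abs.const_mul L))
      ((hψcont.measurable.comp (measurable_const.sub hY)).aestronglyMeasurable) ?_
    filter_upwards with ω
    have h1 : |ψ (u - Y ω) - ψ 0| ≤ (L:ℝ) * |u - Y ω| := by
      have := hψlip.dist_le_mul (u - Y ω) 0
      simpa [Real.dist_eq] using this
    have h2 : |u - Y ω| ≤ |u| + |Y ω| := abs_sub u (Y ω)
    have h3 : |ψ (u - Y ω)| ≤ |ψ 0| + (L:ℝ) * |u - Y ω| := by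
      calc |ψ (u - Y ω)| ≤ |ψ 0| + |ψ (u - Y ω) - ψ 0| := by
            have := abs_add_le (ψ 0) (ψ (u - Y ω) - ψ 0); simpa using this
        _ ≤ _ := by linarith
    have hL : (0:ℝ) ≤ L := L.2
    calc |ψ (u - Y ω)| ≤ |ψ 0| + (L:ℝ) * (|u| + |Y ω|) := by nlinarith
      _ = |ψ 0| + (L:ℝ) * |u| + (L:ℝ) * |Y ω| := by ring
  have hconv : ConvexOn ℝ Set.univ R := by
    refine ⟨convex_univ, fun x _ y _ a b ha hb hab => ?_⟩
    simp only [hR, smul_eq_mul]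
    calc ∫ ω, ψ (a * x + b * y - Y ω) ∂μ
        ≤ ∫ ω, (a * ψ (x - Y ω) + b * ψ (y - Y ω)) ∂μ := by
          apply integral_mono ?_ (((hInt x).const_mul a).add ((hInt y).const_mul b))
          · intro ω
            show ψ (a * x + b * y - Y ω) ≤ a * ψ (x - Y ω) + b * ψ (y - Y ω)
            have he : a * x + b * y - Y ω = a * (x - Y ω) + b * (y - Y ω) := by
              linear_combination Y ω * hab
            rw [he]
            have := hψconv.2 (Set.mem_univ (x - Y ω)) (Set.mem_univ (y - Y ω)) ha hb hab
            simpa [smul_eq_mul] using this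
          · have : (fun ω => ψ (a * x + b * y - Y ω)) = fun ω => ψ ((a*x+b*y) - Y ω) := rfl
            exact hInt (a * x + b * y)
      _ = a * ∫ ω, ψ (x - Y ω) ∂μ + b * ∫ ω, ψ (y - Y ω) ∂μ := by
          rw [integral_add ((hInt x).const_mul a) ((hInt y).const_mul b)]
          simp only [← smul_eq_mul, integral_smul]
  have hDeriv : ∀ u, HasDerivAt R (∫ ω, deriv ψ (u - Y ω) ∂μ) u := by
    intro u
    set S : Set ℝ := {x | ¬ ContinuousAt (rdAux ψ) x} with hSdef
    have hS : S.Countable := (rd_mono hψconv hψlip).countable_not_continuousAt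
    have hnull : μ {ω | u - Y ω ∈ S} = 0 := by
      refine measure_mono_null (fun ω hω => ?_) ((measure_biUnion_null_iff hS).2
        (fun s _ => hNoAtom (u - s)))
      exact Set.mem_biUnion hω (by simp)
    have hae : ∀ᵐ ω ∂μ, HasDerivAt (fun x => ψ (x - Y ω)) (deriv ψ (u - Y ω)) u := by
      have : ∀ᵐ ω ∂μ, u - Y ω ∉ S := by
        rw [ae_iff]; simpa using hnull
      filter_upwards [this] with ω hω
      have hc : ContinuousAt (rdAux ψ) (u - Y ω) := not_not.1 hω
      have hd : HasDerivAt ψ (rdAux ψ (u - Y ω)) (u - Y ω) :=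
        hasDerivAt_of_continuousAt_rd hψconv hψlip hc
      have hdd : deriv ψ (u - Y ω) = rdAux ψ (u - Y ω) := hd.deriv
      rw [hdd]
      have hg : HasDerivAt (fun x : ℝ => x - Y ω) 1 u := (hasDerivAt_id u).sub_const (Y ω)
      exact hd.comp_sub_const u (Y ω)
    have key := hasDerivAt_integral_of_dominated_loc_of_lip (F := fun x ω => ψ (x - Y ω))
      (F' := fun ω => deriv ψ (u - Y ω)) (x₀ := u) (bound := fun _ => (L:ℝ)) (Metric.ball_mem_nhds u one_pos)
      (Filter.Eventually.of_forall fun x =>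
        (hψcont.measurable.comp (measurable_const.sub hY)).aestronglyMeasurable)
      (hInt u)
      (((measurable_deriv ψ).comp (measurable_const.sub hY)).aestronglyMeasurable)
      (Filter.Eventually.of_forall fun ω => by
        have : Real.nnabs ((L:ℝ)) = L := by
          exact Real.nnabs_coe L
        rw [this]
        exact ((hlipc (Y ω))).lipschitzOnWith)
      (integrable_const _)
      hae
    have : R = fun x => ∫ ω, ψ (x - Y ω) ∂μ := funext hR
    rw [this]
    exact key.2
  refine ⟨hconv, hDeriv, fun q hsym u => ?_⟩
  have h1 : R (2 * q - u) = R u := by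
    have e1 : ∀ ω, ψ (2 * q - u - Y ω) = ψ ((Y ω - q) + (u - q)) := by
      intro ω
      rw [← hψeven ((Y ω - q) + (u - q))]
      congr 1; ring
    have hfm : AEStronglyMeasurable (fun x : ℝ => ψ (x + (u - q)))
        (Measure.map (fun ω => Y ω - q) μ) :=
      (hψcont.comp (continuous_id.add continuous_const)).aestronglyMeasurable
    have hfm2 : AEStronglyMeasurable (fun x : ℝ => ψ (x + (u - q)))
        (Measure.map (fun ω => q - Y ω) μ) := by rw [hsym]; exact hfm
    calc R (2 * q - u) = ∫ ω, ψ ((Y ω - q) + (u - q)) ∂μ := by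
          rw [hR]; exact integral_congr_ae (Filter.Eventually.of_forall fun ω => e1 ω)
      _ = ∫ x, ψ (x + (u - q)) ∂(Measure.map (fun ω => Y ω - q) μ) :=
          (integral_map (hY.sub measurable_const).aemeasurable hfm).symm
      _ = ∫ x, ψ (x + (u - q)) ∂(Measure.map (fun ω => q - Y ω) μ) := by rw [hsym]
      _ = ∫ ω, ψ ((q - Y ω) + (u - q)) ∂μ :=
          integral_map (measurable_const.sub hY).aemeasurable hfm2
      _ = ∫ ω, ψ (u - Y ω) ∂μ := by
          apply integral_congr_ae (Filter.Eventually.of_forall fun ω => ?_)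
          congr 1; ring
      _ = R u := (hR u).symm
  have h2 := hconv.2 (Set.mem_univ u) (Set.mem_univ (2 * q - u))
    (by norm_num : (0:ℝ) ≤ 1/2) (by norm_num : (0:ℝ) ≤ 1/2) (by norm_num)
  have h3 : (1/2 : ℝ) • u + (1/2 : ℝ) • (2 * q - u) = q := by
    simp [smul_eq_mul]; ring
  rw [h3, h1] at h2
  calc R q ≤ (1/2:ℝ) • R u + (1/2:ℝ) • R u := h2
    _ = R u := by simp [smul_eq_mul]; ring
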